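/- Suppose s, t ∈ ℚ are nonzero and there exists H ∈ ℚ with t²(s²+1)⁴ - 4s⁴(t²+1)² = H². Let r = (2s/(1+s²))·((1+t²)/(2t)) and u = 2s/(1+s²). Then there exist rationals f, g, h such that (u/r, f), (u, g), (ur, h) all lie on the unit circle x² + y² = 1. -/

import Mathlib

theorem stmt_9 (s t : ℚ) (hs : s ≠ 0) (ht : t ≠ 0)
    (h : ∃ H : ℚ, t^2*(s^2+1)^4 - 4*s^4*(t^2+1)^2 = H^2) :
    let r := (2*s/(1+s^2)) * ((1+t^2)/(2*t))
    let u := 2*s/(1+s^2)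
    ∃ f g h' : ℚ, (u/r)^2 + f^2 = 1 ∧ u^2 + g^2 = 1 ∧ (u*r)^2 + h'^2 = 1 := by
  obtain ⟨H, hH⟩ := h
  intro r u
  have hs2 : (1 : ℚ) + s^2 ≠ 0 := by positivity
  have ht2 : (1 : ℚ) + t^2 ≠ 0 := by positivity
  refine ⟨(1-t^2)/(1+t^2), (1-s^2)/(1+s^2), H/(t*(1+s^2)^2), ?_, ?_, ?_⟩
  · simp only [r, u]
    field_simp
    ring
  · simp only [u]
    field_simp
    ring
  · simp only [r, u]
    field_simp
    linear_combination (-1) * hH
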